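/- Let ω ∈ Ω, x ∈ ℝ and k ∈ {1,…,l}. Suppose there exists a solution f^{(k)}(x) of the eigenvalue equation at x with f^{(k)}_0(x) = e_k which is square-summable at +∞ (i.e., f^{(k)}(x) ∈ l²(ℕ; ℂ^l)). Then lim_{y↓0} ( D(ω) Im[M^φ(x+iy, ω)] D(ω) )_{kk} = 0. -/

import Mathlib

open MeasureTheory Matrix Filter Topology Finset

noncomputable section

/-- Complexification of a real matrix. -/
def cx {l : ℕ} (A : Matrix (Fin l) (Fin l) ℝ) : Matrix (Fin l) (Fin l) ℂ :=
  A.map (fun a => (a : ℂ))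

/-- The imaginary part of a complex square matrix: `Im[A] = (A − Aᴴ)/(2i)`. -/
def matIm {m : Type*} (A : Matrix m m ℂ) : Matrix m m ℂ :=
  (2 * Complex.I)⁻¹ • (A - Aᴴ)

/-- `F` is a matrix solution of the eigenvalue equation
`D_{n-1} F_{n-1} + D_n F_{n+1} + V_n F_n = z F_n` (on `ℤ_+`, for `n ≥ 1`). -/
def IsMatSol {l : ℕ} (Ds Vs : ℕ → Matrix (Fin l) (Fin l) ℂ) (z : ℂ)
    (F : ℕ → Matrix (Fin l) (Fin l) ℂ) : Prop :=
  ∀ n : ℕ, 1 ≤ n → Ds (n - 1) * F (n - 1) + Ds n * F (n + 1) + Vs n * F n = z • F n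

/-- `F` is the Jost solution at `+∞`: a matrix solution with `F 0 = I`,
square-summable on `ℤ_+`. -/
def IsJost {l : ℕ} (Ds Vs : ℕ → Matrix (Fin l) (Fin l) ℂ) (z : ℂ)
    (F : ℕ → Matrix (Fin l) (Fin l) ℂ) : Prop :=
  IsMatSol Ds Vs z F ∧ F 0 = 1 ∧
    Summable (fun n : ℕ => ∑ i, ∑ j, ‖F n i j‖ ^ 2)

/-- `u` is a (vector) solution of the eigenvalue equation on `ℤ_+`. -/
def IsVecSol {l : ℕ} (Ds Vs : ℕ → Matrix (Fin l) (Fin l) ℂ) (z : ℂ)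
    (u : ℕ → Fin l → ℂ) : Prop :=
  ∀ n : ℕ, 1 ≤ n → Ds (n - 1) *ᵥ u (n - 1) + Ds n *ᵥ u (n + 1) + Vs n *ᵥ u n = z • u n

section Aux

variable {l : ℕ}

lemma dot_symm_mulVec (A : Matrix (Fin l) (Fin l) ℂ) (hA : Aᵀ = A)
    (u w : Fin l → ℂ) : (A *ᵥ u) ⬝ᵥ w = u ⬝ᵥ (A *ᵥ w) := by
  rw [dotProduct_mulVec, ← mulVec_transpose, hA]

lemma green (Ds Vs : ℕ → Matrix (Fin l) (Fin l) ℂ)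
    (hDs : ∀ n, (Ds n)ᵀ = Ds n) (hVs : ∀ n, (Vs n)ᵀ = Vs n)
    {z₁ z₂ : ℂ} {u v : ℕ → Fin l → ℂ}
    (hu : IsVecSol Ds Vs z₁ u) (hv : IsVecSol Ds Vs z₂ v) (n : ℕ) :
    (u (n+1) ⬝ᵥ (Ds (n+1) *ᵥ v (n+2)) - u (n+2) ⬝ᵥ (Ds (n+1) *ᵥ v (n+1)))
      - (u n ⬝ᵥ (Ds n *ᵥ v (n+1)) - u (n+1) ⬝ᵥ (Ds n *ᵥ v n))
      = (z₂ - z₁) * (u (n+1) ⬝ᵥ v (n+1)) := by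
  have h1 := hu (n+1) (by omega)
  have h2 := hv (n+1) (by omega)
  simp only [Nat.add_sub_cancel] at h1 h2
  have e1 := congrArg (fun w => w ⬝ᵥ v (n+1)) h1
  have e2 := congrArg (fun w => u (n+1) ⬝ᵥ w) h2
  simp only [add_dotProduct, dotProduct_add, smul_dotProduct, dotProduct_smul,
    smul_eq_mul] at e1 e2
  rw [dot_symm_mulVec _ (hDs n), dot_symm_mulVec _ (hDs (n+1)),
    dot_symm_mulVec _ (hVs (n+1))] at e1
  linear_combination e2 - e1

lemma isVecSol_col (Ds Vs : ℕ → Matrix (Fin l) (Fin l) ℂ) (z : ℂ)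
    {Fm : ℕ → Matrix (Fin l) (Fin l) ℂ} (hFm : IsMatSol Ds Vs z Fm) (ek : Fin l → ℂ) :
    IsVecSol Ds Vs z (fun n => Fm n *ᵥ ek) := by
  intro n hn
  have h := congrArg (fun M => M *ᵥ ek) (hFm n hn)
  simpa [add_mulVec, mulVec_mulVec, smul_mulVec] using h

lemma cx_transpose (A : Matrix (Fin l) (Fin l) ℝ) (hA : A.IsSymm) : (cx A)ᵀ = cx A := by
  ext i j
  simp [cx, transpose_apply, hA.apply]

lemma star_mulVec_cx (A : Matrix (Fin l) (Fin l) ℝ) (u : Fin l → ℂ) (i : Fin l) :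
    (starRingEnd ℂ) ((cx A *ᵥ u) i) = (cx A *ᵥ fun j => (starRingEnd ℂ) (u j)) i := by
  simp [Matrix.mulVec, dotProduct, cx, map_sum]

lemma isVecSol_conj {Dr Vr : ℕ → Matrix (Fin l) (Fin l) ℝ} {z : ℂ} {u : ℕ → Fin l → ℂ}
    (hu : IsVecSol (fun n => cx (Dr n)) (fun n => cx (Vr n)) z u) :
    IsVecSol (fun n => cx (Dr n)) (fun n => cx (Vr n)) ((starRingEnd ℂ) z)
      (fun n => fun i => (starRingEnd ℂ) (u n i)) := by
  intro n hn
  have h := hu n hn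
  funext i
  have h2 := congrArg (fun w => (starRingEnd ℂ) (w i)) h
  simp only [Pi.add_apply, Pi.smul_apply, smul_eq_mul, map_add, _root_.map_mul] at h2
  simpa [star_mulVec_cx] using h2

lemma isVecSol_add {Ds Vs : ℕ → Matrix (Fin l) (Fin l) ℂ} {z : ℂ} {u v : ℕ → Fin l → ℂ}
    (hu : IsVecSol Ds Vs z u) (hv : IsVecSol Ds Vs z v) :
    IsVecSol Ds Vs z (fun n => u n + v n) := by
  intro n hn
  have h1 := hu n hn; have h2 := hv n hn
  simp only [mulVec_add, smul_add]
  rw [← h1, ← h2]; abel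

lemma isVecSol_smul {Ds Vs : ℕ → Matrix (Fin l) (Fin l) ℂ} {z c : ℂ} {u : ℕ → Fin l → ℂ}
    (hu : IsVecSol Ds Vs z u) : IsVecSol Ds Vs z (fun n => c • u n) := by
  intro n hn
  have h1 := hu n hn
  simp only [mulVec_smul]
  rw [smul_comm, ← h1]; module

lemma entry_tendsto_zero {u : ℕ → Fin l → ℂ}
    (hus : Summable fun n => ∑ i, ‖u n i‖ ^ 2) (i : Fin l) :
    Tendsto (fun n => u n i) atTop (𝓝 0) := by
  have h1 : Summable fun n => ‖u n i‖ ^ 2 := by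
    apply Summable.of_nonneg_of_le (fun n => by positivity)
      (fun n => Finset.single_le_sum (f := fun j => ‖u n j‖^2)
        (fun j _ => by positivity) (Finset.mem_univ i)) hus
  have h2 : Tendsto (fun n => ‖u n i‖ ^ 2) atTop (𝓝 0) :=
    h1.tendsto_atTop_zero
  have h3 : Tendsto (fun n => ‖u n i‖) atTop (𝓝 0) := by
    have h4 := (Real.continuous_sqrt.tendsto 0).comp h2
    have h5 : (fun n => Real.sqrt (‖u n i‖ ^ 2)) = fun n => ‖u n i‖ := by
      funext n; exact Real.sqrt_sq (norm_nonneg _)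
    rw [Function.comp_def, h5, Real.sqrt_zero] at h4
    exact h4
  rw [tendsto_zero_iff_norm_tendsto_zero]
  simpa using h3

lemma sumabs_tendsto_zero {u : ℕ → Fin l → ℂ}
    (hus : Summable fun n => ∑ i, ‖u n i‖ ^ 2) :
    Tendsto (fun n => ∑ i, ‖u n i‖) atTop (𝓝 0) := by
  have h : Tendsto (fun n => ∑ i : Fin l, ‖u n i‖) atTop (𝓝 (∑ i : Fin l, 0)) := by
    apply tendsto_finset_sum
    intro i _
    have h2 := entry_tendsto_zero hus i
    rw [tendsto_zero_iff_norm_tendsto_zero] at h2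
    simpa using h2
  simpa using h

lemma dot_mulVec_abs_le {C : ℝ} (A : Matrix (Fin l) (Fin l) ℝ)
    (hC : ∀ i j, |A i j| ≤ C) (p q : Fin l → ℂ) :
    ‖p ⬝ᵥ (cx A *ᵥ q)‖ ≤ C * ((∑ i, ‖p i‖) * (∑ j, ‖q j‖)) := by
  calc ‖p ⬝ᵥ (cx A *ᵥ q)‖ ≤ ∑ i, ‖p i * (cx A *ᵥ q) i‖ :=
        norm_sum_le _ _
    _ ≤ ∑ i, ‖p i‖ * (C * ∑ j, ‖q j‖) := by
        apply Finset.sum_le_sum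
        intro i _
        rw [norm_mul]
        apply mul_le_mul_of_nonneg_left _ (norm_nonneg _)
        calc ‖(cx A *ᵥ q) i‖ ≤ ∑ j, ‖(A i j : ℂ) * q j‖ := by
              apply le_of_eq_of_le _ (norm_sum_le _ _)
              congr 1
          _ ≤ ∑ j, C * ‖q j‖ := by
              apply Finset.sum_le_sum
              intro j _
              rw [norm_mul, Complex.norm_real, Real.norm_eq_abs]
              exact mul_le_mul_of_nonneg_right (hC i j) (norm_nonneg _)
          _ = C * ∑ j, ‖q j‖ := by rw [Finset.mul_sum]
    _ = C * ((∑ i, ‖p i‖) * (∑ j, ‖q j‖)) := by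
        rw [← Finset.sum_mul]; ring

lemma wronskian_tsum {Dr : ℕ → Matrix (Fin l) (Fin l) ℝ} {C : ℝ}
    (hC : ∀ n i j, |Dr n i j| ≤ C)
    (hDsym : ∀ n, (Dr n).IsSymm)
    {Vs : ℕ → Matrix (Fin l) (Fin l) ℂ} (hVs : ∀ n, (Vs n)ᵀ = Vs n)
    {z₁ z₂ : ℂ} {u v : ℕ → Fin l → ℂ}
    (hu : IsVecSol (fun n => cx (Dr n)) Vs z₁ u)
    (hv : IsVecSol (fun n => cx (Dr n)) Vs z₂ v)
    (hus : Summable fun n => ∑ i, ‖u n i‖ ^ 2)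
    (hvs : Summable fun n => ∑ i, ‖v n i‖ ^ 2)
    (hsum : Summable fun m => u (m+1) ⬝ᵥ v (m+1)) :
    (z₂ - z₁) * ∑' m, u (m+1) ⬝ᵥ v (m+1)
      = -(u 0 ⬝ᵥ (cx (Dr 0) *ᵥ v 1) - u 1 ⬝ᵥ (cx (Dr 0) *ᵥ v 0)) := by
  set w : ℕ → ℂ := fun n => u n ⬝ᵥ (cx (Dr n) *ᵥ v (n+1)) - u (n+1) ⬝ᵥ (cx (Dr n) *ᵥ v n)
    with hwdef
  have hstep : ∀ n, w (n+1) - w n = (z₂ - z₁) * (u (n+1) ⬝ᵥ v (n+1)) := fun n =>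
    green _ _ (fun m => cx_transpose _ (hDsym m)) hVs hu hv n
  set C' := max C 0 with hC'def
  have hC' : ∀ n i j, |Dr n i j| ≤ C' := fun n i j => le_trans (hC n i j) (le_max_left _ _)
  set P : ℕ → ℝ := fun n => ∑ i, ‖u n i‖ with hPdef
  set Q : ℕ → ℝ := fun n => ∑ i, ‖v n i‖ with hQdef
  have hP : Tendsto P atTop (𝓝 0) := sumabs_tendsto_zero hus
  have hQ : Tendsto Q atTop (𝓝 0) := sumabs_tendsto_zero hvs
  have hPs : Tendsto (fun n => P (n+1)) atTop (𝓝 0) :=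
    hP.comp (tendsto_add_atTop_nat 1)
  have hQs : Tendsto (fun n => Q (n+1)) atTop (𝓝 0) :=
    hQ.comp (tendsto_add_atTop_nat 1)
  have hwbound : ∀ n, ‖w n‖ ≤ C' * (P n * Q (n+1)) + C' * (P (n+1) * Q n) := by
    intro n
    refine le_trans (norm_sub_le _ _) (add_le_add ?_ ?_)
    · simpa using dot_mulVec_abs_le (Dr n) (hC' n) (u n) (v (n+1))
    · simpa using dot_mulVec_abs_le (Dr n) (hC' n) (u (n+1)) (v n)
  have hrhs : Tendsto (fun n => C' * (P n * Q (n+1)) + C' * (P (n+1) * Q n)) atTop (𝓝 0) := by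
    have h1 : Tendsto (fun n => C' * (P n * Q (n+1))) atTop (𝓝 (C' * (0 * 0))) :=
      ((hP.mul hQs)).const_mul C'
    have h2 : Tendsto (fun n => C' * (P (n+1) * Q n)) atTop (𝓝 (C' * (0 * 0))) :=
      ((hPs.mul hQ)).const_mul C'
    simpa using h1.add h2
  have hwlim : Tendsto w atTop (𝓝 0) := squeeze_zero_norm hwbound hrhs
  have hpartial : ∀ N, ∑ m ∈ Finset.range N, (z₂ - z₁) * (u (m+1) ⬝ᵥ v (m+1)) = w N - w 0 := by
    intro N
    rw [← Finset.sum_range_sub w N]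
    exact Finset.sum_congr rfl fun m _ => (hstep m).symm
  have h1 : Tendsto (fun N => ∑ m ∈ Finset.range N, (z₂ - z₁) * (u (m+1) ⬝ᵥ v (m+1)))
      atTop (𝓝 ((z₂ - z₁) * ∑' m, u (m+1) ⬝ᵥ v (m+1))) := by
    have := (hsum.hasSum.mul_left (z₂ - z₁)).tendsto_sum_nat
    simpa [tsum_mul_left] using this
  have h2 : Tendsto (fun N => ∑ m ∈ Finset.range N, (z₂ - z₁) * (u (m+1) ⬝ᵥ v (m+1)))
      atTop (𝓝 (0 - w 0)) := by
    simp only [hpartial]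
    exact hwlim.sub_const (w 0)
  have h3 := tendsto_nhds_unique h1 h2
  rw [h3, zero_sub]

lemma entry_eq (Dm : Matrix (Fin l) (Fin l) ℝ) (hsym : Dm.IsSymm) (hunit : IsUnit Dm)
    (F₁ : Matrix (Fin l) (Fin l) ℂ) (k : Fin l) :
    (cx Dm * matIm (-(F₁ * (cx Dm)⁻¹)) * cx Dm) k k
      = ((-((cx Dm * F₁) k k).im : ℝ) : ℂ) := by
  set E := cx Dm with hE
  have hdet : IsUnit E.det := by
    have h1 : IsUnit Dm.det := (Matrix.isUnit_iff_isUnit_det Dm).1 hunit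
    have h2 : E.det = Complex.ofRealHom Dm.det := by
      exact
        (RingHom.map_det Complex.ofRealHom Dm).symm
    rw [h2]
    exact h1.map _
  have hEH : Eᴴ = E := by
    ext i j
    simp only [conjTranspose_apply, hE, cx, map_apply]
    rw [← hsym.apply i j]
    simp
  have hAH : (-(F₁ * E⁻¹))ᴴ = -(E⁻¹ * F₁ᴴ) := by
    rw [conjTranspose_neg, conjTranspose_mul, conjTranspose_nonsing_inv, hEH]
  have h1 : E * (-(F₁ * E⁻¹)) * E = -(E * F₁) := by
    rw [Matrix.mul_neg, Matrix.neg_mul, ← Matrix.mul_assoc,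
      Matrix.mul_assoc (E * F₁) E⁻¹ E, Matrix.nonsing_inv_mul E hdet, Matrix.mul_one]
  have h2 : E * (-(E⁻¹ * F₁ᴴ)) * E = -(F₁ᴴ * E) := by
    rw [Matrix.mul_neg, Matrix.neg_mul, ← Matrix.mul_assoc,
      Matrix.mul_nonsing_inv E hdet, Matrix.one_mul]
  have key : E * matIm (-(F₁ * E⁻¹)) * E = (2 * Complex.I)⁻¹ • (F₁ᴴ * E - E * F₁) := by
    rw [matIm, hAH, Matrix.mul_smul, Matrix.smul_mul]
    congr 1
    rw [Matrix.mul_sub, Matrix.sub_mul, h1, h2, neg_sub_neg]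
  rw [key]
  have hconj : (F₁ᴴ * E) k k = (starRingEnd ℂ) ((E * F₁) k k) := by
    rw [Matrix.mul_apply, Matrix.mul_apply, map_sum]
    apply Finset.sum_congr rfl
    intro i _
    rw [_root_.map_mul, conjTranspose_apply]
    simp only [hE, cx, map_apply, Complex.conj_ofReal]
    rw [← hsym.apply k i]
    exact mul_comm _ _
  rw [Matrix.smul_apply, Matrix.sub_apply, hconj, smul_eq_mul]
  set η := (E * F₁) k k with hη
  have hsc : (starRingEnd ℂ) η - η = -((2 * η.im : ℝ) * Complex.I) := by
    rw [← Complex.sub_conj η]; ring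
  rw [hsc]
  have h2I : (2 * Complex.I) ≠ 0 := by simp [Complex.I_ne_zero]
  apply mul_left_cancel₀ h2I
  rw [mul_inv_cancel_left₀ h2I]
  push_cast
  ring

end Aux

/-- If there is a square-summable solution of the eigenvalue equation at the
real energy `x` with initial value `e_k`, then the `(k,k)` entry of
`D(ω) Im[M^φ(x+iy, ω)] D(ω)` tends to `0` as `y ↓ 0`, where
`M^φ(z,ω) = −F_1(z,ω) D(ω)⁻¹` is the Weyl–Titchmarsh function. -/
theorem weyl_titchmarsh_diag_entry_tendsto_zero
    {Ω : Type*} [MeasurableSpace Ω] (ν : Measure Ω) [IsProbabilityMeasure ν]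
    (T : Equiv.Perm Ω) (hT : Ergodic (⇑T) ν)
    {l : ℕ} (D V : Ω → Matrix (Fin l) (Fin l) ℝ)
    (hDsymm : ∀ ω, (D ω).IsSymm) (hDinv : ∀ ω, IsUnit (D ω))
    (hDbdd : ∃ C : ℝ, ∀ ω i j, |D ω i j| ≤ C)
    (hVsymm : ∀ ω, (V ω).IsSymm)
    (ω : Ω) (x : ℝ) (k : Fin l)
    (F : ℂ → ℕ → Matrix (Fin l) (Fin l) ℂ)
    (hF : ∀ z : ℂ, z.im ≠ 0 →
      IsJost (fun n => cx (D ((T ^ n) ω))) (fun n => cx (V ((T ^ n) ω))) z (F z))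
    (g : ℕ → Fin l → ℂ)
    (hg : IsVecSol (fun n => cx (D ((T ^ n) ω))) (fun n => cx (V ((T ^ n) ω)))
      ((x : ℂ)) g)
    (hg0 : g 0 = fun i => if i = k then 1 else 0)
    (hgsum : Summable (fun n : ℕ => ∑ i, ‖g n i‖ ^ 2)) :
    Tendsto
      (fun y : ℝ =>
        (cx (D ω) * matIm (-(F ((x : ℂ) + (y : ℂ) * Complex.I) 1 * (cx (D ω))⁻¹))
          * cx (D ω)) k k)
      (𝓝[>] 0) (𝓝 0) := by
  classical
  obtain ⟨C, hC⟩ := hDbdd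
  have hω0 : (T ^ (0:ℕ)) ω = ω := by simp
  set ek : Fin l → ℂ := fun i => if i = k then 1 else 0 with hekdef
  -- the real-part solution
  set gre : ℕ → Fin l → ℂ :=
    fun n i => (2⁻¹ : ℂ) * (g n i + (starRingEnd ℂ) (g n i)) with hgredef
  have hgre_sol : IsVecSol (fun n => cx (D ((T ^ n) ω))) (fun n => cx (V ((T ^ n) ω)))
      ((x : ℂ)) gre := by
    have h1 := isVecSol_conj (Dr := fun n => D ((T ^ n) ω)) (Vr := fun n => V ((T ^ n) ω)) hg
    rw [Complex.conj_ofReal] at h1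
    have h2 := isVecSol_add hg h1
    have h3 := isVecSol_smul (c := (2⁻¹ : ℂ)) h2
    have hfun : gre = fun n => (2⁻¹ : ℂ) • (g n + fun i => (starRingEnd ℂ) (g n i)) := by
      funext n i
      simp [hgredef, smul_eq_mul]
    rw [hfun]
    exact h3
  have hgre0 : gre 0 = ek := by
    funext i
    simp only [hgredef, hg0, hekdef]
    split
    · simp
      norm_num
    · simp
  have hgre_conj : ∀ n i, (starRingEnd ℂ) (gre n i) = gre n i := by
    intro n i
    simp only [hgredef, _root_.map_mul, map_add, Complex.conj_conj, map_inv₀]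
    rw [Complex.conj_ofNat]
    ring
  have hgre_abs : ∀ n i, ‖gre n i‖ ≤ ‖g n i‖ := by
    intro n i
    rw [hgredef]
    calc ‖(2⁻¹ : ℂ) * (g n i + (starRingEnd ℂ) (g n i))‖
        = 2⁻¹ * ‖g n i + (starRingEnd ℂ) (g n i)‖ := by
          rw [norm_mul, norm_inv]
          norm_num
      _ ≤ 2⁻¹ * (‖g n i‖ + ‖(starRingEnd ℂ) (g n i)‖) := by
          gcongr
          exact norm_add_le _ _
      _ = ‖g n i‖ := by rw [Complex.norm_conj]; ring
  set a : ℕ → ℝ := fun n => ∑ i, ‖gre n i‖ ^ 2 with hadef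
  have ha_nonneg : ∀ n, 0 ≤ a n := fun n => Finset.sum_nonneg fun i _ => by positivity
  have ha_sum : Summable a := by
    apply Summable.of_nonneg_of_le ha_nonneg _ hgsum
    intro n
    apply Finset.sum_le_sum
    intro i _
    exact pow_le_pow_left₀ (norm_nonneg _) (hgre_abs n i) 2
  set A := ∑' n, a n with hAdef
  have hA0 : 0 ≤ A := tsum_nonneg ha_nonneg
  have ha_shift : Summable (fun m => a (m+1)) := (summable_nat_add_iff 1).2 ha_sum
  have ha_shift_le : ∑' m, a (m+1) ≤ A := by
    rw [hAdef, Summable.tsum_eq_zero_add ha_sum]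
    linarith [ha_nonneg 0]
  have hDrsym : ∀ n : ℕ, (D ((T ^ n) ω)).IsSymm := fun n => hDsymm _
  have hVscx : ∀ n : ℕ, (cx (V ((T ^ n) ω)))ᵀ = cx (V ((T ^ n) ω)) :=
    fun n => cx_transpose _ (hVsymm _)
  have hCn : ∀ (n : ℕ) i j, |D ((T ^ n) ω) i j| ≤ C := fun n i j => hC _ i j
  have hek_dot : ∀ w : Fin l → ℂ, ek ⬝ᵥ w = w k := by
    intro w
    simp [hekdef, dotProduct, ite_mul]
  have hmvek : ∀ (M : Matrix (Fin l) (Fin l) ℂ) i, (M *ᵥ ek) i = M i k := by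
    intro M i
    simp [Matrix.mulVec, dotProduct, hekdef, mul_ite]
  -- main estimate for fixed y > 0
  have key : ∀ y : ℝ, 0 < y →
      ‖(cx (D ω) * matIm (-(F ((x:ℂ) + (y:ℂ)*Complex.I) 1 * (cx (D ω))⁻¹))
        * cx (D ω)) k k‖ ≤ y * A := by
    intro y hy
    set z : ℂ := (x:ℂ) + (y:ℂ)*Complex.I with hzdef
    have hzim : z.im = y := by simp [hzdef]
    have hJ := hF z (by rw [hzim]; exact ne_of_gt hy)
    set v : ℕ → Fin l → ℂ := fun n => F z n *ᵥ ek with hvdef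
    have hv_sol : IsVecSol (fun n => cx (D ((T ^ n) ω))) (fun n => cx (V ((T ^ n) ω))) z v :=
      isVecSol_col _ _ _ hJ.1 ek
    have hv_entry : ∀ n i, v n i = F z n i k := by
      intro n i
      simp [hvdef, hmvek]
    have hv0 : v 0 = ek := by
      funext i
      rw [hv_entry, hJ.2.1]
      simp [hekdef, Matrix.one_apply, eq_comm]
    set b : ℕ → ℝ := fun n => ∑ i, ‖v n i‖ ^ 2 with hbdef
    have hb_nonneg : ∀ n, 0 ≤ b n := fun n => Finset.sum_nonneg fun i _ => by positivity
    have hb_sum : Summable b := by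
      apply Summable.of_nonneg_of_le hb_nonneg _ hJ.2.2
      intro n
      apply Finset.sum_le_sum
      intro i _
      rw [hv_entry]
      exact Finset.single_le_sum (f := fun j => ‖F z n i j‖ ^ 2)
        (fun j _ => by positivity) (Finset.mem_univ k)
    have hb_shift : Summable (fun m => b (m+1)) := (summable_nat_add_iff 1).2 hb_sum
    set S := ∑' m, b (m+1) with hSdef
    have hS0 : 0 ≤ S := tsum_nonneg fun m => hb_nonneg (m+1)
    set η := (cx (D ω) * F z 1) k k with hηdef
    -- η in terms of v
    have hη2 : η = ∑ i, ((D ω k i : ℝ) : ℂ) * v 1 i := by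
      rw [hηdef, Matrix.mul_apply]
      apply Finset.sum_congr rfl
      intro i _
      rw [hv_entry]
      rfl
    -- conj v is also a solution
    have hcv_sol := isVecSol_conj (Dr := fun n => D ((T ^ n) ω))
      (Vr := fun n => V ((T ^ n) ω)) hv_sol
    have hcv_sum : Summable fun n => ∑ i, ‖(starRingEnd ℂ) (v n i)‖ ^ 2 := by
      simpa [Complex.norm_conj] using hb_sum
    have hdot_a : ∀ m, (fun i => (starRingEnd ℂ) (v m i)) ⬝ᵥ v m = ((b m : ℝ) : ℂ) := by
      intro m
      rw [hbdef]
      push_cast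
      apply Finset.sum_congr rfl
      intro i _
      rw [mul_comm, Complex.mul_conj, Complex.normSq_eq_norm_sq]
      push_cast
      ring
    have hfun_a : (fun m => (fun i => (starRingEnd ℂ) (v (m+1) i)) ⬝ᵥ v (m+1))
        = fun m => ((b (m+1) : ℝ) : ℂ) := funext fun m => hdot_a (m+1)
    have hsum_a : Summable fun m => (fun i => (starRingEnd ℂ) (v (m+1) i)) ⬝ᵥ v (m+1) := by
      rw [hfun_a]
      exact Complex.summable_ofReal.2 hb_shift
    have hW1 := wronskian_tsum hCn hDrsym hVscx hcv_sol hv_sol hcv_sum hb_sum hsum_a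
    rw [hfun_a] at hW1
    rw [← Complex.ofReal_tsum, ← hSdef] at hW1
    -- compute the boundary terms in hW1
    have hcv0 : (fun i => (starRingEnd ℂ) (v 0 i)) = ek := by
      rw [hv0]
      funext i
      simp only [hekdef]
      split <;> simp
    have hterm1 : ∀ u0 : Fin l → ℂ, u0 = ek →
        u0 ⬝ᵥ (cx (D ((T ^ (0:ℕ)) ω)) *ᵥ v 1) = η := by
      intro u0 hu0
      rw [hu0, hω0, hek_dot, hη2]
      simp only [Matrix.mulVec, dotProduct]
      apply Finset.sum_congr rfl
      intro i _
      rfl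
    have hcxek : ∀ i, (cx (D ((T ^ (0:ℕ)) ω)) *ᵥ ek) i = ((D ω i k : ℝ) : ℂ) := by
      intro i
      rw [hω0, hmvek]
      rfl
    have hterm2 : (fun i => (starRingEnd ℂ) (v 1 i)) ⬝ᵥ (cx (D ((T ^ (0:ℕ)) ω)) *ᵥ v 0)
        = (starRingEnd ℂ) η := by
      rw [hv0, hη2, map_sum]
      simp only [dotProduct]
      apply Finset.sum_congr rfl
      intro i _
      rw [hcxek i, _root_.map_mul, Complex.conj_ofReal, ← (hDsymm ω).apply k i]
      exact mul_comm _ _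
    rw [hterm2, hterm1 _ hcv0] at hW1
    -- take imaginary parts: η.im = -(y*S)
    have hzconj : z - (starRingEnd ℂ) z = ((2 * y : ℝ) : ℂ) * Complex.I := by
      rw [Complex.sub_conj, hzim]
    rw [hzconj] at hW1
    have him1 := congrArg Complex.im hW1
    simp only [Complex.mul_im, Complex.mul_re, Complex.ofReal_re, Complex.ofReal_im,
      Complex.I_re, Complex.I_im, Complex.neg_im, Complex.sub_im, Complex.conj_im] at him1
    have hηim : η.im = -(y * S) := by
      field_simp at him1
      linarith
    -- second Wronskian with gre
    have hgre_cv_sum : Summable fun n => ∑ i, ‖gre n i‖ ^ 2 := ha_sum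
    have hnorm_le : ∀ m, ‖gre (m+1) ⬝ᵥ v (m+1)‖ ≤ (a (m+1) + b (m+1)) / 2 := by
      intro m
      calc ‖gre (m+1) ⬝ᵥ v (m+1)‖ ≤ ∑ i, ‖gre (m+1) i * v (m+1) i‖ := by
            exact norm_sum_le _ _
        _ ≤ ∑ i, (‖gre (m+1) i‖ ^ 2 + ‖v (m+1) i‖ ^ 2) / 2 := by
            apply Finset.sum_le_sum
            intro i _
            rw [norm_mul]
            nlinarith [norm_nonneg (gre (m+1) i),
              norm_nonneg (v (m+1) i),
              sq_nonneg (‖gre (m+1) i‖ - ‖v (m+1) i‖)]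
        _ = (a (m+1) + b (m+1)) / 2 := by
            show ∑ i, (‖gre (m+1) i‖ ^ 2 + ‖v (m+1) i‖ ^ 2) / 2
                = ((∑ i, ‖gre (m+1) i‖ ^ 2) + ∑ i, ‖v (m+1) i‖ ^ 2) / 2
            rw [← Finset.sum_add_distrib, Finset.sum_div]
    have hbnd_sum : Summable fun m => (a (m+1) + b (m+1)) / 2 :=
      (ha_shift.add hb_shift).div_const 2
    have hsum_b : Summable fun m => gre (m+1) ⬝ᵥ v (m+1) :=
      Summable.of_norm_bounded hbnd_sum hnorm_le
    have hW2 := wronskian_tsum hCn hDrsym hVscx hgre_sol hv_sol ha_sum hb_sum hsum_b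
    set Tt := ∑' m, gre (m+1) ⬝ᵥ v (m+1) with hTtdef
    have hc_real : ((gre 1) ⬝ᵥ (cx (D ((T ^ (0:ℕ)) ω)) *ᵥ v 0)).im = 0 := by
      rw [← Complex.conj_eq_iff_im]
      rw [hv0]
      simp only [dotProduct, map_sum]
      apply Finset.sum_congr rfl
      intro i _
      rw [_root_.map_mul, hgre_conj, hcxek i, Complex.conj_ofReal]
    have hzx : z - (x : ℂ) = ((y : ℝ) : ℂ) * Complex.I := by
      rw [hzdef]; ring
    rw [hterm1 _ hgre0, hzx] at hW2
    have him2 := congrArg Complex.im hW2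
    simp only [Complex.mul_im, Complex.mul_re, Complex.ofReal_re, Complex.ofReal_im,
      Complex.I_re, Complex.I_im, Complex.neg_im, Complex.sub_im, hc_real] at him2
    -- him2 : y * Tt.re = -η.im  (up to arrangement)
    have hTre : Tt.re = S := by
      have h : y * Tt.re = y * S := by
        rw [hηim] at him2
        linarith
      exact mul_left_cancel₀ (ne_of_gt hy) h
    -- bound S ≤ A
    have hnorm_sum : Summable fun m => ‖gre (m+1) ⬝ᵥ v (m+1)‖ :=
      Summable.of_nonneg_of_le (fun m => norm_nonneg _) hnorm_le hbnd_sum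
    have hS_le : S ≤ A := by
      have h1 : Tt.re ≤ ‖Tt‖ := Complex.re_le_norm Tt
      have h2 : ‖Tt‖ ≤ ∑' m, ‖gre (m+1) ⬝ᵥ v (m+1)‖ := norm_tsum_le_tsum_norm hnorm_sum
      have h3 : ∑' m, ‖gre (m+1) ⬝ᵥ v (m+1)‖ ≤ ∑' m, (a (m+1) + b (m+1)) / 2 :=
        Summable.tsum_le_tsum hnorm_le hnorm_sum hbnd_sum
      have h4 : ∑' m, (a (m+1) + b (m+1)) / 2 = ((∑' m, a (m+1)) + S) / 2 := by
        rw [hSdef, ← Summable.tsum_add ha_shift hb_shift, ← tsum_div_const]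
      have h5 : Tt.re ≤ ((∑' m, a (m+1)) + S) / 2 := by
        rw [← h4]
        exact le_trans h1 (le_trans h2 h3)
      rw [hTre] at h5
      linarith [ha_shift_le]
    -- conclude
    rw [entry_eq (D ω) (hDsymm ω) (hDinv ω) (F z 1) k, ← hηdef, hηim]
    simp only [neg_neg]
    rw [Complex.norm_real, Real.norm_eq_abs,
      abs_of_nonneg (mul_nonneg (le_of_lt hy) hS0)]
    exact mul_le_mul_of_nonneg_left hS_le (le_of_lt hy)
  -- squeeze
  have hev : ∀ᶠ (y : ℝ) in 𝓝[>] (0:ℝ),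
      ‖(cx (D ω) * matIm (-(F ((x : ℂ) + (y : ℂ) * Complex.I) 1 * (cx (D ω))⁻¹))
        * cx (D ω)) k k‖ ≤ y * A :=
    eventually_nhdsWithin_of_forall fun y hy => key y hy
  have htend : Tendsto (fun y : ℝ => y * A) (𝓝[>] (0:ℝ)) (𝓝 0) := by
    have h : Tendsto (fun y : ℝ => y * A) (𝓝 0) (𝓝 0) := by
      have := (continuous_id.mul (continuous_const (y := A))).tendsto (0 : ℝ)
      simpa [Pi.mul_def] using this
    exact h.mono_left nhdsWithin_le_nhds
  exact squeeze_zero_norm' hev htend
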